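/- Let $\|\cdot\|_X$ be a norm on $\mathbb{R}^n$ whose group of linear autoisometries is not $\{\operatorname{Id},-\operatorname{Id}\}$. Then there exists a linear isometry $F:(\mathbb{R}^n,\|\cdot\|_X)\to(\mathbb{R}^n,\|\cdot\|_X)$ with $\min\{\|F+\operatorname{Id}\|_X,\|F-\operatorname{Id}\|_X\}\geq 1$, where $\|\cdot\|_X$ here denotes the operator norm induced by the norm. -/

import Mathlib

open scoped Real

def IsQuasinorm {E : Type*} [AddCommGroup E] [Module ℝ E] (q : E → ℝ) : Prop :=
  (∀ x, 0 ≤ q x) ∧ (∀ x, q x = 0 ↔ x = 0) ∧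
  (∀ (c : ℝ) (x : E), q (c • x) = |c| * q x) ∧
  ∃ k : ℝ, 0 < k ∧ ∀ x y, q (x + y) ≤ k * (q x + q y)

def IsNormFn {E : Type*} [AddCommGroup E] [Module ℝ E] (q : E → ℝ) : Prop :=
  (∀ x, 0 ≤ q x) ∧ (∀ x, q x = 0 ↔ x = 0) ∧
  (∀ (c : ℝ) (x : E), q (c • x) = |c| * q x) ∧
  ∀ x y, q (x + y) ≤ q x + q y

def distSet {E : Type*} [AddCommGroup E] [Module ℝ E] (q r : E → ℝ) : Set ℝ :=
  {μ : ℝ | 1 ≤ μ ∧ ∃ l : ℝ, 0 < l ∧ ∀ x, q x ≤ l * r x ∧ l * r x ≤ μ * q x}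

noncomputable def multDist {E : Type*} [AddCommGroup E] [Module ℝ E] (q r : E → ℝ) : ℝ :=
  sInf (distSet q r)

set_option maxHeartbeats 1000000

section helpers
variable {E' : Type*} [AddCommGroup E'] [Module ℝ E'] {q' : E' → ℝ}

lemma qn_nonneg (hq : IsNormFn q') (x : E') : 0 ≤ q' x := hq.1 x
lemma qn_eq_zero (hq : IsNormFn q') (x : E') : q' x = 0 ↔ x = 0 := hq.2.1 x
lemma qn_smul (hq : IsNormFn q') (c : ℝ) (x : E') : q' (c • x) = |c| * q' x := hq.2.2.1 c x
lemma qn_add (hq : IsNormFn q') (x y : E') : q' (x + y) ≤ q' x + q' y := hq.2.2.2 x y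
end helpers



section aux
variable {E : Type*} [AddCommGroup E] [Module ℝ E] {q : E → ℝ}

lemma qn_zero (hq : IsNormFn q) : q 0 = 0 := (hq.2.1 0).mpr rfl

lemma qn_neg (hq : IsNormFn q) (x : E) : q (-x) = q x := by
  have := hq.2.2.1 (-1) x
  simpa using this

lemma qn_sub_le (hq : IsNormFn q) (x y : E) : q (x - y) ≤ q x + q y := by
  have := hq.2.2.2 x (-y)
  rw [qn_neg hq] at this
  simpa [sub_eq_add_neg] using this

lemma qn_sum_le (hq : IsNormFn q) {ι : Type*} (s : Finset ι) (f : ι → E) :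
    q (∑ i ∈ s, f i) ≤ ∑ i ∈ s, q (f i) := by
  classical
  induction s using Finset.induction_on with
  | empty => simp [qn_zero hq]
  | insert a s hnot ih =>
    rw [Finset.sum_insert hnot, Finset.sum_insert hnot]
    exact le_trans (hq.2.2.2 _ _) (by linarith)

end aux

section euc
variable {n : ℕ} {q : EuclideanSpace ℝ (Fin n) → ℝ}

lemma qn_upper (hq : IsNormFn q) : ∃ C : ℝ, 0 < C ∧ ∀ x, q x ≤ C * ‖x‖ := by
  classical
  refine ⟨(∑ i, q (EuclideanSpace.single i (1:ℝ))) + 1, ?_, ?_⟩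
  · have : 0 ≤ ∑ i, q (EuclideanSpace.single i (1:ℝ)) :=
      Finset.sum_nonneg fun i _ => hq.1 _
    linarith
  · intro x
    have habs : ∀ j, |x j| ≤ ‖x‖ := by
      intro j
      rw [EuclideanSpace.norm_eq, ← Real.sqrt_sq_eq_abs]
      apply Real.sqrt_le_sqrt
      refine Finset.single_le_sum (f := fun i => ‖x i‖ ^ 2) (fun i _ => sq_nonneg _)
        (Finset.mem_univ j) |>.trans_eq' ?_
      simp [Real.norm_eq_abs, sq_abs]
    have hx : x = ∑ i, x i • EuclideanSpace.single i (1:ℝ) := by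
      ext j
      rw [WithLp.ofLp_sum, Finset.sum_apply]
      simp [EuclideanSpace.single_apply]
    calc q x ≤ ∑ i, q (x i • EuclideanSpace.single i (1:ℝ)) := by
          conv_lhs => rw [hx]
          exact qn_sum_le hq _ _
      _ ≤ ∑ i, ‖x‖ * q (EuclideanSpace.single i (1:ℝ)) := by
          refine Finset.sum_le_sum fun i _ => ?_
          rw [hq.2.2.1]
          exact mul_le_mul_of_nonneg_right (habs i) (hq.1 _)
      _ = (∑ i, q (EuclideanSpace.single i (1:ℝ))) * ‖x‖ := by
          rw [Finset.sum_mul]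
          exact Finset.sum_congr rfl fun i _ => mul_comm _ _
      _ ≤ _ := by nlinarith [norm_nonneg x]

end euc

section euc
variable {n : ℕ} {q : EuclideanSpace ℝ (Fin n) → ℝ}
lemma qn_continuous (hq : IsNormFn q) : Continuous q := by
  obtain ⟨C, hC, hCle⟩ := qn_upper hq
  have lip : LipschitzWith (Real.toNNReal C) q := by
    apply LipschitzWith.of_dist_le_mul
    intro x y
    rw [Real.dist_eq, dist_eq_norm]
    have h1 : q x ≤ q y + q (x - y) := by
      have := qn_add hq y (x - y); simpa using this
    have h2 : q y ≤ q x + q (x - y) := by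
      have := qn_add hq x (y - x)
      have e : q (y - x) = q (x - y) := by rw [← qn_neg hq (y - x)]; congr 1; abel
      rw [e] at this; simpa using this
    have h3 : q (x - y) ≤ C * ‖x - y‖ := hCle _
    rw [abs_le]
    constructor <;> [skip; skip] <;>
      · simp only [Real.coe_toNNReal _ hC.le]
        nlinarith
  exact lip.continuous

lemma qn_lower (hq : IsNormFn q) (hn : 0 < n) : ∃ m : ℝ, 0 < m ∧ ∀ x, m * ‖x‖ ≤ q x := by
  have hne : (Metric.sphere (0 : EuclideanSpace ℝ (Fin n)) 1).Nonempty := by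
    refine ⟨EuclideanSpace.single ⟨0, hn⟩ (1:ℝ), ?_⟩
    simp [EuclideanSpace.norm_single]
  obtain ⟨x₀, hx₀S, hx₀min⟩ :=
    (isCompact_sphere (0 : EuclideanSpace ℝ (Fin n)) 1).exists_isMinOn hne
      ((qn_continuous hq).continuousOn)
  have hx₀ : x₀ ≠ 0 := by
    intro h
    have := mem_sphere_zero_iff_norm.mp hx₀S
    rw [h] at this; simp at this
  refine ⟨q x₀, (qn_nonneg hq x₀).lt_of_ne' (fun h => hx₀ ((qn_eq_zero hq x₀).mp h)), ?_⟩
  intro x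
  rcases eq_or_ne x 0 with rfl | hx
  · simp [qn_zero hq, qn_nonneg hq]
  · have hnx : ‖x‖ ≠ 0 := norm_ne_zero_iff.mpr hx
    have hmem : (‖x‖⁻¹ • x) ∈ Metric.sphere (0 : EuclideanSpace ℝ (Fin n)) 1 := by
      rw [mem_sphere_zero_iff_norm, norm_smul]
      simp [abs_of_nonneg (norm_nonneg x), inv_mul_cancel₀ hnx]
    have hle : q x₀ ≤ q (‖x‖⁻¹ • x) := hx₀min hmem
    have hq1 : q (‖x‖⁻¹ • x) = ‖x‖⁻¹ * q x := by
      rw [qn_smul hq]; congr 1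
      exact abs_of_nonneg (by positivity)
    rw [hq1] at hle
    have hpos : (0:ℝ) < ‖x‖ := (norm_nonneg x).lt_of_ne' hnx
    calc q x₀ * ‖x‖ ≤ (‖x‖⁻¹ * q x) * ‖x‖ := by nlinarith [hle]
      _ = q x := by field_simp
end euc

section euc
variable {n : ℕ} {q : EuclideanSpace ℝ (Fin n) → ℝ}
lemma planar {p : EuclideanSpace ℝ (Fin 2) → ℝ} (hp : IsNormFn p)
    (M : EuclideanSpace ℝ (Fin 2) →ₗ[ℝ] EuclideanSpace ℝ (Fin 2)) (r : ℝ) (hr : 1 ≤ r)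
    (hM : ∀ v, ‖M v‖ = r * ‖v‖) : ∃ v, p v = 1 ∧ 1 ≤ p (M v) := by
  have key : ∃ v : EuclideanSpace ℝ (Fin 2), v ≠ 0 ∧ p v ≤ p (M v) := by
    by_contra hcon
    push_neg at hcon
    -- min of p v - p (M v) on sphere
    have hne : (Metric.sphere (0 : EuclideanSpace ℝ (Fin 2)) 1).Nonempty := by
      refine ⟨EuclideanSpace.single 0 (1:ℝ), ?_⟩
      simp [EuclideanSpace.norm_single]
    obtain ⟨v₀, hv₀S, hv₀min⟩ :=
      (isCompact_sphere (0 : EuclideanSpace ℝ (Fin 2)) 1).exists_isMinOn hne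
        (((qn_continuous hp).sub ((qn_continuous hp).comp M.continuous_of_finiteDimensional)).continuousOn)
    set δ := p v₀ - p (M v₀) with hδ
    have hv₀ : v₀ ≠ 0 := fun h => by
      have := mem_sphere_zero_iff_norm.mp hv₀S; rw [h] at this; simp at this
    have hδpos : 0 < δ := sub_pos.mpr (hcon v₀ hv₀)
    -- scaling: ∀ v, δ * ‖v‖ ≤ p v - p (M v)
    have hstep : ∀ v : EuclideanSpace ℝ (Fin 2), δ * ‖v‖ ≤ p v - p (M v) := by
      intro v
      rcases eq_or_ne v 0 with rfl | hv
      · simp [qn_zero hp, map_zero]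
      · have hnv : (0:ℝ) < ‖v‖ := norm_pos_iff.mpr hv
        have hmem : (‖v‖⁻¹ • v) ∈ Metric.sphere (0 : EuclideanSpace ℝ (Fin 2)) 1 := by
          rw [mem_sphere_zero_iff_norm, norm_smul]
          simp [abs_of_nonneg (norm_nonneg v), inv_mul_cancel₀ hnv.ne']
        have hle : δ ≤ p (‖v‖⁻¹ • v) - p (M (‖v‖⁻¹ • v)) := hv₀min hmem
        rw [map_smul, qn_smul hp, qn_smul hp, abs_of_nonneg (by positivity : (0:ℝ) ≤ ‖v‖⁻¹)] at hle
        have := mul_le_mul_of_nonneg_right hle hnv.le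
        calc δ * ‖v‖ ≤ (‖v‖⁻¹ * p v - ‖v‖⁻¹ * p (M v)) * ‖v‖ := this
          _ = p v - p (M v) := by field_simp
    -- iterate
    have hnorm_pow : ∀ (m : ℕ) (v : EuclideanSpace ℝ (Fin 2)), ‖(M ^ m) v‖ = r ^ m * ‖v‖ := by
      intro m
      induction m with
      | zero => intro v; simp [Module.End.one_apply]
      | succ m ih =>
        intro v
        rw [pow_succ', Module.End.mul_apply, hM, ih, pow_succ]
        ring
    have hiter : ∀ (m : ℕ) (v : EuclideanSpace ℝ (Fin 2)),
        p ((M ^ m) v) ≤ p v - m * (δ * ‖v‖) := by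
      intro m
      induction m with
      | zero => intro v; simp [Module.End.one_apply]
      | succ m ih =>
        intro v
        have h1 := hstep ((M ^ m) v)
        have h2 : (M ^ (m+1)) v = M ((M ^ m) v) := by
          rw [pow_succ', Module.End.mul_apply]
        have h3 := ih v
        have h4 : ‖(M ^ m) v‖ = r ^ m * ‖v‖ := hnorm_pow m v
        have h5 : (1:ℝ) ≤ r ^ m := one_le_pow₀ hr
        have h6 : (0:ℝ) ≤ ‖v‖ := norm_nonneg v
        rw [h2]
        rw [h4] at h1
        push_cast
        nlinarith [mul_nonneg (mul_nonneg hδpos.le h6) (sub_nonneg.mpr h5)]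
    obtain ⟨m, hm⟩ := exists_nat_gt (p v₀ / δ)
    have h1 := hiter m v₀
    have h2 : ‖v₀‖ = 1 := mem_sphere_zero_iff_norm.mp hv₀S
    have h3 : 0 ≤ p ((M ^ m) v₀) := qn_nonneg hp _
    rw [h2] at h1
    have : p v₀ / δ < m := hm
    have : p v₀ < m * δ := (div_lt_iff₀ hδpos).mp hm
    nlinarith
  obtain ⟨v, hv, hvle⟩ := key
  have hpv : 0 < p v := (qn_nonneg hp v).lt_of_ne' (fun h => hv ((qn_eq_zero hp v).mp h))
  refine ⟨(p v)⁻¹ • v, ?_, ?_⟩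
  · rw [qn_smul hp, abs_of_nonneg (by positivity)]
    field_simp
  · rw [map_smul, qn_smul hp, abs_of_nonneg (by positivity : (0:ℝ) ≤ (p v)⁻¹)]
    calc (1:ℝ) = (p v)⁻¹ * p v := (inv_mul_cancel₀ hpv.ne').symm
      _ ≤ (p v)⁻¹ * p (M v) := mul_le_mul_of_nonneg_left hvle (by positivity)
end euc

open scoped Real

lemma num_lemma_core {θ : ℝ} (h0 : 0 < θ) (h2 : θ ≤ 2/3 * π) :
    ∃ k : ℕ, 1 ≤ k ∧ |Real.cos (k * θ)| ≤ 1/2 := by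
  have hπ := Real.pi_pos
  refine ⟨⌈(π/3)/θ⌉₊, Nat.one_le_ceil_iff.mpr (by positivity), ?_⟩
  set k := ⌈(π/3)/θ⌉₊ with hk
  have hge : π/3 ≤ k * θ := (div_le_iff₀ h0).mp (Nat.le_ceil _)
  have hle : (k : ℝ) * θ ≤ 2/3 * π := by
    rcases le_or_gt (π/3) θ with hc | hc
    · have h1 : ((π/3)/θ) ≤ 1 := by
        rw [div_le_one h0]; exact hc
      have : k ≤ 1 := by
        rw [hk]; exact_mod_cast Nat.ceil_le.mpr (by exact_mod_cast h1)
      have hk1 : k = 1 := le_antisymm this (Nat.one_le_ceil_iff.mpr (by positivity))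
      rw [hk1]; push_cast; linarith
    · have := Nat.ceil_lt_add_one (by positivity : (0:ℝ) ≤ (π/3)/θ)
      have h1 : (k:ℝ) < (π/3)/θ + 1 := this
      have : (k:ℝ) * θ < ((π/3)/θ + 1) * θ := by nlinarith
      have h2' : ((π/3)/θ + 1) * θ = π/3 + θ := by field_simp
      nlinarith
  have hcos_le : Real.cos (k * θ) ≤ 1/2 := by
    rw [← Real.cos_pi_div_three]
    apply Real.cos_le_cos_of_nonneg_of_le_pi (by positivity) (by linarith)
    exact hge
  have hcos_ge : -(1/2) ≤ Real.cos (k * θ) := by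
    have : Real.cos (2/3 * π) = -(1/2) := by
      have : (2/3) * π = π - π/3 := by ring
      rw [this, Real.cos_pi_sub, Real.cos_pi_div_three]
    rw [← this]
    apply Real.cos_le_cos_of_nonneg_of_le_pi (by positivity) (by linarith)
    exact hle
  rw [abs_le]; exact ⟨hcos_ge, hcos_le⟩

lemma num_lemma {θ : ℝ} (h0 : 0 < θ) (h2 : θ < π) :
    ∃ k : ℕ, 1 ≤ k ∧ |Real.cos (k * θ)| ≤ 1/2 := by
  have hπ := Real.pi_pos
  rcases le_or_gt θ (2/3 * π) with hc | hc
  · exact num_lemma_core h0 hc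
  · obtain ⟨k, hk1, hk2⟩ := num_lemma_core (θ := π - θ) (by linarith) (by linarith)
    refine ⟨k, hk1, ?_⟩
    have : (k:ℝ) * (π - θ) = k * π - k * θ := by ring
    rw [this, Real.cos_nat_mul_pi_sub, abs_mul, abs_pow, abs_neg, abs_one, one_pow, one_mul] at hk2
    exact hk2

lemma good_power (l : ℂ) (him : l.im ≠ 0) (habs : 1 ≤ ‖l‖) :
    ∃ k : ℕ, (l^k).im ≠ 0 ∧ 1 ≤ ‖l^k - 1‖ ∧ 1 ≤ ‖l^k + 1‖ := by
  have hπ := Real.pi_pos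
  set θ₀ := Complex.arg l with hθ₀
  have hsin : Real.sin θ₀ ≠ 0 := by
    rw [hθ₀, Complex.sin_arg]
    intro h
    rcases div_eq_zero_iff.mp h with h | h
    · exact him h
    · exact him (by rw [norm_eq_zero.mp h]; rfl)
  have hθ0 : θ₀ ≠ 0 := fun h => hsin (by rw [h]; exact Real.sin_zero)
  have habs_arg : |θ₀| ≤ π := Complex.abs_arg_le_pi l
  have habs_lt : |θ₀| < π := by
    rcases lt_or_eq_of_le habs_arg with h | h
    · exact h
    · exfalso
      rcases abs_eq (le_of_lt hπ) |>.mp h with h | h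
      · exact hsin (by rw [h]; exact Real.sin_pi)
      · exact hsin (by rw [h]; simp)
  obtain ⟨k, hk1, hkcos⟩ := num_lemma (abs_pos.mpr hθ0) habs_lt
  have hcos_eq : Real.cos (k * |θ₀|) = Real.cos (k * θ₀) := by
    rcases abs_choice θ₀ with h | h
    · rw [h]
    · rw [h]; rw [show (k:ℝ) * -θ₀ = -(k * θ₀) by ring, Real.cos_neg]
  rw [hcos_eq] at hkcos
  have harg : ((k:ℂ) * ((θ₀:ℂ) * Complex.I)) = ((k * θ₀ : ℝ) : ℂ) * Complex.I := by
    push_cast; ring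
  have hl : l = (‖l‖ : ℂ) * Complex.exp (θ₀ * Complex.I) := (Complex.norm_mul_exp_arg_mul_I l).symm
  have hlk : l ^ k = ((‖l‖ : ℝ) ^ k : ℝ) * Complex.exp ((k * θ₀ : ℝ) * Complex.I) := by
    conv_lhs => rw [hl]
    rw [mul_pow, ← Complex.exp_nat_mul, harg]
    push_cast
    ring
  set A := (‖l‖) ^ k with hA
  set c := Real.cos (k * θ₀) with hc
  set s' := Real.sin (k * θ₀) with hs'
  have hre : (l^k).re = A * c := by
    rw [hlk, Complex.re_ofReal_mul, Complex.exp_ofReal_mul_I_re]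
  have him' : (l^k).im = A * s' := by
    rw [hlk, Complex.im_ofReal_mul, Complex.exp_ofReal_mul_I_im]
  have hRk : (1:ℝ) ≤ A := one_le_pow₀ habs
  have hApos : (0:ℝ) < A := lt_of_lt_of_le one_pos hRk
  have hsin2 : s' ^ 2 + c ^ 2 = 1 := Real.sin_sq_add_cos_sq _
  have habs2 := abs_le.mp hkcos
  have h7 : A * c ≤ A * (1/2) := mul_le_mul_of_nonneg_left habs2.2 hApos.le
  have h8 : A * (-(1/2)) ≤ A * c := mul_le_mul_of_nonneg_left habs2.1 hApos.le
  have h9 : A ≤ A * A := le_mul_of_one_le_left hApos.le hRk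
  refine ⟨k, ?_, ?_, ?_⟩
  · rw [him']
    intro hz
    rcases mul_eq_zero.mp hz with h | h
    · linarith
    · rw [h] at hsin2
      nlinarith [habs2.1, habs2.2]
  · rw [Complex.norm_def, Real.one_le_sqrt, Complex.normSq_apply,
      Complex.sub_re, Complex.sub_im, Complex.one_re, Complex.one_im, hre, him']
    have e1 : (A*c-1)*(A*c-1)+(A*s'-0)*(A*s'-0) = A*A*(s'^2+c^2) - 2*(A*c)+1 := by ring
    rw [e1, hsin2, mul_one]
    linarith
  · rw [Complex.norm_def, Real.one_le_sqrt, Complex.normSq_apply,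
      Complex.add_re, Complex.add_im, Complex.one_re, Complex.one_im, hre, him']
    have e1 : (A*c+1)*(A*c+1)+(A*s'+0)*(A*s'+0) = A*A*(s'^2+c^2) + 2*(A*c)+1 := by ring
    rw [e1, hsin2, mul_one]
    linarith


section euc
variable {n : ℕ} {q : EuclideanSpace ℝ (Fin n) → ℝ}
lemma iso_pow (hq : IsNormFn q)
    (H : EuclideanSpace ℝ (Fin n) →ₗ[ℝ] EuclideanSpace ℝ (Fin n))
    (hH : ∀ x, q (H x) = q x) (k : ℕ) : ∀ x, q ((H ^ k) x) = q x := by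
  induction k with
  | zero => intro x; simp [Module.End.one_apply]
  | succ k ih =>
    intro x
    rw [pow_succ, Module.End.mul_apply, ih, hH]

def eucL (H : EuclideanSpace ℝ (Fin n) →ₗ[ℝ] EuclideanSpace ℝ (Fin n)) :
    (Fin n → ℝ) →ₗ[ℝ] (Fin n → ℝ) :=
  (WithLp.linearEquiv 2 ℝ (Fin n → ℝ)).toLinearMap ∘ₗ H ∘ₗ
    (WithLp.linearEquiv 2 ℝ (Fin n → ℝ)).symm.toLinearMap

lemma mulVec_pow_apply
    (H : EuclideanSpace ℝ (Fin n) →ₗ[ℝ] EuclideanSpace ℝ (Fin n))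
    (B : Matrix (Fin n) (Fin n) ℝ) (hB : ∀ x : EuclideanSpace ℝ (Fin n), B.mulVec x = H x) (k : ℕ) :
    ∀ x : EuclideanSpace ℝ (Fin n), (B ^ k).mulVec x = (H ^ k) x := by
  induction k with
  | zero => intro x; simp [Matrix.one_mulVec, Module.End.one_apply]
  | succ k ih =>
    intro x
    rw [pow_succ', ← Matrix.mulVec_mulVec, ih, hB, pow_succ', Module.End.mul_apply]

lemma eig_pow {m : ℕ} (M : Matrix (Fin m) (Fin m) ℂ) (z : Fin m → ℂ) (lam : ℂ)
    (h : M.mulVec z = lam • z) (k : ℕ) : (M ^ k).mulVec z = lam ^ k • z := by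
  induction k with
  | zero => simp [Matrix.one_mulVec]
  | succ k ih =>
    rw [pow_succ, ← Matrix.mulVec_mulVec, h, Matrix.mulVec_smul, ih, smul_smul, pow_succ]
    ring_nf

lemma caseA (hn : 0 < n) (hq : IsNormFn q)
    (H : EuclideanSpace ℝ (Fin n) →ₗ[ℝ] EuclideanSpace ℝ (Fin n))
    (hH : ∀ x, q (H x) = q x)
    (lam : ℂ) (z : Fin n → ℂ) (hz : z ≠ 0)
    (heig : (Matrix.map (LinearMap.toMatrix' (eucL H))
        (algebraMap ℝ ℂ)).mulVec z = lam • z)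
    (him : lam.im ≠ 0) (habs : 1 ≤ ‖lam‖) :
    ∃ F : EuclideanSpace ℝ (Fin n) →ₗ[ℝ] EuclideanSpace ℝ (Fin n),
      (∀ x, q (F x) = q x) ∧ ∃ xm xp, q xm ≤ 1 ∧ q xp ≤ 1 ∧
        1 ≤ q (F xm - xm) ∧ 1 ≤ q (F xp + xp) := by
  classical
  set B : Matrix (Fin n) (Fin n) ℝ := LinearMap.toMatrix' (eucL H) with hBdef
  have hB : ∀ x : EuclideanSpace ℝ (Fin n), B.mulVec x = H x := by
    intro x
    rw [hBdef, ← Matrix.toLin'_apply, Matrix.toLin'_toMatrix']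
    rfl
  obtain ⟨k, him', hm1, hp1⟩ := good_power lam him habs
  set μ := lam ^ k with hμdef
  set F := H ^ k with hFdef
  have hFiso : ∀ x, q (F x) = q x := iso_pow hq H hH k
  set BF := B ^ k with hBFdef
  have hBF : ∀ x : EuclideanSpace ℝ (Fin n), BF.mulVec x = F x := mulVec_pow_apply H B hB k
  have heigF : (BF.map (algebraMap ℝ ℂ)).mulVec z = μ • z := by
    have h1 : BF.map (algebraMap ℝ ℂ) = ((algebraMap ℝ ℂ).mapMatrix B) ^ k := by
      rw [← map_pow]
      rfl
    rw [h1]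
    exact eig_pow _ z lam (by rw [← heig]; rfl) k
  set a := μ.re with ha
  set b := μ.im with hb
  set u : EuclideanSpace ℝ (Fin n) := WithLp.toLp 2 (fun i => (z i).re) with hu_def
  set w : EuclideanSpace ℝ (Fin n) := WithLp.toLp 2 (fun i => (z i).im) with hw_def
  have hcomp : ∀ i, (∑ j, ((BF i j : ℝ) : ℂ) * z j) = μ * z i := by
    intro i
    have := congrFun heigF i
    simpa [Matrix.mulVec, dotProduct, Matrix.map_apply, Pi.smul_apply, smul_eq_mul] using this
  have hu : F u = a • u - b • w := by
    apply WithLp.ofLp_injective 2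
    rw [← hBF u]
    funext i
    have h1 : B ^ k = BF := rfl
    have h2 : (BF.mulVec u) i = ∑ j, BF i j * (z j).re := by
      simp [Matrix.mulVec, dotProduct, hu_def]
    have h3 : (∑ j, ((BF i j : ℝ) : ℂ) * z j).re = ∑ j, BF i j * (z j).re := by
      rw [Complex.re_sum]
      exact Finset.sum_congr rfl fun j _ => Complex.re_ofReal_mul _ _
    have h4 := congrArg Complex.re (hcomp i)
    rw [h3] at h4
    rw [h2, h4, Complex.mul_re]
    show a * (z i).re - b * (z i).im = a * u i - b * w i
    rfl
  have hw : F w = b • u + a • w := by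
    apply WithLp.ofLp_injective 2
    rw [← hBF w]
    funext i
    have h2 : (BF.mulVec w) i = ∑ j, BF i j * (z j).im := by
      simp [Matrix.mulVec, dotProduct, hw_def]
    have h3 : (∑ j, ((BF i j : ℝ) : ℂ) * z j).im = ∑ j, BF i j * (z j).im := by
      rw [Complex.im_sum]
      exact Finset.sum_congr rfl fun j _ => Complex.im_ofReal_mul _ _
    have h4 := congrArg Complex.im (hcomp i)
    rw [h3] at h4
    rw [h2, h4, Complex.mul_im]
    show a * (z i).im + b * (z i).re = b * u i + a * w i
    simp only [hu_def, hw_def, WithLp.ofLp_toLp]; ring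
  have hbne : b ≠ 0 := him'
  -- w ≠ 0
  have hwne : w ≠ 0 := by
    intro h0
    have hu0 : u = 0 := by
      have := hw
      rw [h0, map_zero, smul_zero, add_zero] at this
      have hb' := this.symm
      rcases smul_eq_zero.mp hb' with h | h
      · exact absurd h hbne
      · exact h
    apply hz
    funext i
    have h1 : (z i).re = 0 := by simpa [hu_def] using congrArg (fun v : EuclideanSpace ℝ (Fin n) => v i) hu0
    have h2 : (z i).im = 0 := by simpa [hw_def] using congrArg (fun v : EuclideanSpace ℝ (Fin n) => v i) h0
    exact Complex.ext h1 h2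
  -- independence
  have hindep : ∀ α β : ℝ, α • u + β • w = 0 → α = 0 ∧ β = 0 := by
    intro α β hv
    have h2 : (α*a + β*b) • u + (β*a - α*b) • w = 0 := by
      have e : F (α•u + β•w) = 0 := by rw [hv, map_zero]
      rw [map_add, map_smul, map_smul, hu, hw] at e
      have e2 : (α*a + β*b) • u + (β*a - α*b) • w = α•(a•u - b•w) + β•(b•u + a•w) := by
        module
      rw [e2, e]
    have h3 : α • w - β • u = 0 := by
      have e3 : b • (α•w - β•u) = a • (α•u + β•w) - ((α*a + β*b)•u + (β*a - α*b)•w) := by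
        module
      rw [hv, h2, smul_zero, sub_zero] at e3
      rcases smul_eq_zero.mp e3 with h | h
      · exact absurd h hbne
      · exact h
    have h3' : β • u = α • w := by
      have := sub_eq_zero.mp h3
      exact this.symm
    have h4 : (α*α + β*β) • w = 0 := by
      have e4 : (β*α) • u + (β*β) • w = 0 := by
        have := congrArg (β • ·) hv
        simpa [smul_add, smul_smul] using this
      have e5 : (β*α) • u = (α*α) • w := by
        rw [mul_comm β α, ← smul_smul, h3', smul_smul]
      rw [e5, ← add_smul] at e4
      exact e4
    rcases smul_eq_zero.mp h4 with h | h
    · constructor <;> nlinarith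
    · exact absurd h hwne
  -- the plane map
  set Φ : EuclideanSpace ℝ (Fin 2) →ₗ[ℝ] EuclideanSpace ℝ (Fin n) :=
    (LinearMap.smulRight ((LinearMap.proj 0 : (Fin 2 → ℝ) →ₗ[ℝ] ℝ) ∘ₗ (WithLp.linearEquiv 2 ℝ (Fin 2 → ℝ)).toLinearMap) u) +
    (LinearMap.smulRight ((LinearMap.proj 1 : (Fin 2 → ℝ) →ₗ[ℝ] ℝ) ∘ₗ (WithLp.linearEquiv 2 ℝ (Fin 2 → ℝ)).toLinearMap) w) with hΦdef
  have hΦ : ∀ v : EuclideanSpace ℝ (Fin 2), Φ v = v 0 • u + v 1 • w := by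
    intro v
    simp [hΦdef]
  set p : EuclideanSpace ℝ (Fin 2) → ℝ := fun v => q (Φ v) with hpdef
  have hp : IsNormFn p := by
    refine ⟨fun v => qn_nonneg hq _, ?_, ?_, ?_⟩
    · intro v
      constructor
      · intro h
        have h0 : Φ v = 0 := (qn_eq_zero hq _).mp h
        rw [hΦ] at h0
        obtain ⟨h1, h2⟩ := hindep _ _ h0
        ext i
        fin_cases i
        · exact h1
        · exact h2
      · intro h; rw [h]
        show q (Φ 0) = 0
        rw [map_zero]; exact qn_zero hq
    · intro c v
      show q (Φ (c • v)) = |c| * q (Φ v)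
      rw [map_smul]
      exact qn_smul hq c _
    · intro x y
      show q (Φ (x + y)) ≤ q (Φ x) + q (Φ y)
      rw [map_add]
      exact qn_add hq _ _
  -- conformal matrices
  have planar_step : ∀ s : ℝ, 1 ≤ ‖μ - s‖ →
      ∃ v : EuclideanSpace ℝ (Fin 2), p v = 1 ∧
        1 ≤ q (((a - s) * v 0 + b * v 1) • u + (-b * v 0 + (a - s) * v 1) • w) := by
    intro s hs
    set M : Matrix (Fin 2) (Fin 2) ℝ := !![a - s, b; -b, a - s] with hM
    set Mm : EuclideanSpace ℝ (Fin 2) →ₗ[ℝ] EuclideanSpace ℝ (Fin 2) := (WithLp.linearEquiv 2 ℝ (Fin 2 → ℝ)).symm.toLinearMap ∘ₗ Matrix.toLin' M ∘ₗ (WithLp.linearEquiv 2 ℝ (Fin 2 → ℝ)).toLinearMap with hMmdef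
    have hMmv : ∀ v : EuclideanSpace ℝ (Fin 2), Mm v = WithLp.toLp 2 (M.mulVec v) := fun _ => rfl
    have hcomp0 : ∀ v : EuclideanSpace ℝ (Fin 2), (M.mulVec v) 0 = (a - s) * v 0 + b * v 1 := by
      intro v
      simp [hM, Matrix.mulVec, dotProduct, Fin.sum_univ_two]
    have hcomp1 : ∀ v : EuclideanSpace ℝ (Fin 2), (M.mulVec v) 1 = -b * v 0 + (a - s) * v 1 := by
      intro v
      simp [hM, Matrix.mulVec, dotProduct, Fin.sum_univ_two]
    have habs2 : (‖μ - s‖)^2 = (a-s)^2 + b^2 := by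
      rw [Complex.sq_norm, Complex.normSq_apply, Complex.sub_re, Complex.sub_im]
      simp [Complex.ofReal_re, Complex.ofReal_im]
      ring
    have hnorm : ∀ v, ‖Mm v‖ = ‖μ - s‖ * ‖v‖ := by
      intro v
      rw [hMmv]
      rw [EuclideanSpace.norm_eq, EuclideanSpace.norm_eq, Fin.sum_univ_two, Fin.sum_univ_two]
      have hnn : (0:ℝ) ≤ ‖μ - s‖ := norm_nonneg _
      rw [show ‖μ - s‖ * Real.sqrt (‖v 0‖^2 + ‖v 1‖^2)
          = Real.sqrt ((‖μ - s‖)^2 * (‖v 0‖^2 + ‖v 1‖^2)) by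
        rw [Real.sqrt_mul (sq_nonneg _), Real.sqrt_sq hnn]]
      congr 1
      rw [WithLp.ofLp_toLp, hcomp0, hcomp1, habs2]
      simp only [Real.norm_eq_abs, sq_abs]
      ring
    obtain ⟨v, hv1, hv2⟩ := planar hp Mm (‖μ - s‖) hs hnorm
    refine ⟨v, hv1, ?_⟩
    have he : Φ (Mm v) = ((a - s) * v 0 + b * v 1) • u + (-b * v 0 + (a - s) * v 1) • w := by
      rw [hΦ, hMmv, WithLp.ofLp_toLp, hcomp0, hcomp1]
    calc (1:ℝ) ≤ p (Mm v) := hv2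
      _ = q (Φ (Mm v)) := rfl
      _ = _ := by rw [he]
  obtain ⟨vm, hvm1, hvm2⟩ := planar_step 1 (by push_cast; exact hm1)
  obtain ⟨vp, hvp1, hvp2⟩ := planar_step (-1) (by
    have e : (μ - ((-1:ℝ):ℂ)) = μ + 1 := by push_cast; ring
    rw [e]; exact hp1)
  refine ⟨F, hFiso, Φ vm, Φ vp, le_of_eq hvm1, le_of_eq hvp1, ?_, ?_⟩
  · have key : F (Φ vm) - Φ vm
        = ((a - 1) * vm 0 + b * vm 1) • u + (-b * vm 0 + (a - 1) * vm 1) • w := by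
      rw [hΦ, map_add, map_smul, map_smul, hu, hw]
      module
    rw [key]
    exact hvm2
  · have key : F (Φ vp) + Φ vp
        = ((a - (-1)) * vp 0 + b * vp 1) • u + (-b * vp 0 + (a - (-1)) * vp 1) • w := by
      rw [hΦ, map_add, map_smul, map_smul, hu, hw]
      module
    rw [key]
    exact hvp2
end euc

section euc
variable {n : ℕ} {q : EuclideanSpace ℝ (Fin n) → ℝ}
lemma eval_charpoly' {R : Type*} [CommRing R] {m : Type*} [DecidableEq m] [Fintype m]
    (M : Matrix m m R) (t : R) :
    M.charpoly.eval t = (t • (1 : Matrix m m R) - M).det := by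
  rw [Matrix.charpoly, ← Polynomial.coe_evalRingHom, RingHom.map_det]
  congr 1
  ext i j
  by_cases h : i = j
  · subst h; simp [Matrix.charmatrix_apply_eq, Matrix.one_apply]
  · simp [Matrix.charmatrix_apply_ne _ _ _ h, Matrix.one_apply, h]

lemma eigvec_of_root {K : Type*} [Field K] {m : ℕ} (B : Matrix (Fin m) (Fin m) K) (t : K)
    (h : B.charpoly.eval t = 0) : ∃ x : Fin m → K, x ≠ 0 ∧ B.mulVec x = t • x := by
  rw [eval_charpoly'] at h
  obtain ⟨x, hx, hx0⟩ := Matrix.exists_mulVec_eq_zero_iff.mpr h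
  refine ⟨x, hx, ?_⟩
  rw [Matrix.sub_mulVec, Matrix.smul_mulVec, Matrix.one_mulVec] at hx0
  have := sub_eq_zero.mp hx0
  exact this.symm

-- unipotent contradiction
lemma no_unipotent (hn : 0 < n) (hq : IsNormFn q)
    (S : EuclideanSpace ℝ (Fin n) →ₗ[ℝ] EuclideanSpace ℝ (Fin n))
    (hS : ∀ x, q (S x) = q x) (ε : ℝ) (hε : ε = 1 ∨ ε = -1) (d : ℕ)
    (hd : (S - ε • LinearMap.id) ^ d = 0)
    (hne : S ≠ ε • LinearMap.id) : False := by
  classical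
  set N : EuclideanSpace ℝ (Fin n) →ₗ[ℝ] EuclideanSpace ℝ (Fin n) := S - ε • LinearMap.id with hNdef
  have hε2 : ε * ε = 1 := by rcases hε with h | h <;> rw [h] <;> norm_num
  have hεabs : |ε| = 1 := by rcases hε with h | h <;> rw [h] <;> norm_num
  have hex : ∃ j, N ^ j = 0 := ⟨d, hd⟩
  have hj0 : N ^ (Nat.find hex) = 0 := Nat.find_spec hex
  set j := Nat.find hex with hjdef
  have hjne0 : j ≠ 0 := by
    intro h
    rw [h, pow_zero] at hj0
    have e0 : EuclideanSpace.single (⟨0, hn⟩ : Fin n) (1:ℝ) ≠ 0 := by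
      intro hc
      have := congrArg (fun y => ‖y‖) hc
      simp [EuclideanSpace.norm_single] at this
    have := LinearMap.ext_iff.mp hj0 (EuclideanSpace.single (⟨0, hn⟩ : Fin n) (1:ℝ))
    simp [Module.End.one_apply] at this
  have hjne1 : j ≠ 1 := by
    intro h
    rw [h, pow_one] at hj0
    exact hne (by rw [← sub_eq_zero]; exact hj0)
  obtain ⟨m, hm⟩ : ∃ m, j = m + 2 := ⟨j - 2, by omega⟩
  have hprev : ¬ (N ^ (m + 1) = 0) := Nat.find_min hex (by omega)
  obtain ⟨x, hx⟩ : ∃ x, (N ^ (m+1)) x ≠ 0 := by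
    by_contra hc
    push_neg at hc
    exact hprev (LinearMap.ext fun x => by rw [hc x]; rfl)
  set y := (N ^ m) x with hy
  have hNy : N y ≠ 0 := by
    intro hc
    apply hx
    rw [pow_succ', Module.End.mul_apply]
    exact hc
  have hNNy : N (N y) = 0 := by
    have : (N ^ (m + 2)) x = 0 := by rw [← hm, hj0]; rfl
    rw [pow_succ', Module.End.mul_apply, pow_succ', Module.End.mul_apply] at this
    exact this
  have hSy : S y = ε • y + N y := by
    have : N y = S y - ε • y := by simp [hNdef, LinearMap.sub_apply]
    rw [this]; abel
  have hSNy : S (N y) = ε • N y := by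
    have h1 : N (N y) = S (N y) - ε • N y := by simp [hNdef, LinearMap.sub_apply]
    rw [hNNy] at h1
    exact sub_eq_zero.mp h1.symm
  have hiter : ∀ i : ℕ, (S ^ i) y = ε ^ i • y + ((i : ℝ) * ε ^ (i+1)) • N y := by
    intro i
    induction i with
    | zero => simp [Module.End.one_apply]
    | succ i ih =>
      rw [pow_succ', Module.End.mul_apply, ih, map_add, map_smul, map_smul, hSy, hSNy]
      have he : ε ^ (i + 2) = ε ^ i := by
        rw [pow_succ, pow_succ, mul_assoc, hε2, mul_one]
      rw [smul_add]
      push_cast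
      rw [show ((i:ℝ) + 1) * ε ^ (i + 1 + 1) = (i:ℝ) * ε ^ (i + 2) + ε ^ i by
        rw [he]; ring]
      rw [pow_succ]
      module
  have hbound : ∀ i : ℕ, (i : ℝ) * q (N y) ≤ 2 * q y := by
    intro i
    have h1 : q ((S ^ i) y) = q y := iso_pow hq S hS i y
    rw [hiter i] at h1
    have h2 : q (((i : ℝ) * ε ^ (i+1)) • N y) ≤ q (ε ^ i • y + ((i : ℝ) * ε ^ (i+1)) • N y) + q (ε ^ i • y) := by
      have := qn_add hq (ε ^ i • y + ((i : ℝ) * ε ^ (i+1)) • N y) (-(ε ^ i • y))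
      rw [qn_neg hq] at this
      simpa using this
    rw [h1] at h2
    have h3 : q (((i : ℝ) * ε ^ (i+1)) • N y) = (i : ℝ) * q (N y) := by
      rw [qn_smul hq, abs_mul, abs_pow, hεabs, one_pow, mul_one, Nat.abs_cast]
    have h4 : q (ε ^ i • y) = q y := by
      rw [qn_smul hq, abs_pow, hεabs, one_pow, one_mul]
    rw [h3, h4] at h2
    linarith
  have hqNy : 0 < q (N y) := by
    rcases (qn_nonneg hq (N y)).lt_or_eq with h | h
    · exact h
    · exact absurd ((qn_eq_zero hq _).mp h.symm) hNy
  obtain ⟨i, hi⟩ := exists_nat_gt (2 * q y / q (N y))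
  have := hbound i
  rw [div_lt_iff₀ hqNy] at hi
  linarith

-- conclusion builder
lemma conclude (hq : IsNormFn q)
    (F : EuclideanSpace ℝ (Fin n) →ₗ[ℝ] EuclideanSpace ℝ (Fin n))
    (hFiso : ∀ x, q (F x) = q x) (xm xp : EuclideanSpace ℝ (Fin n))
    (hxm : q xm ≤ 1) (hxp : q xp ≤ 1)
    (h1 : 1 ≤ q (F xm - xm)) (h2 : 1 ≤ q (F xp + xp)) :
    1 ≤ min
      (sSup ((fun x => q ((F + (LinearMap.id : EuclideanSpace ℝ (Fin n) →ₗ[ℝ] EuclideanSpace ℝ (Fin n))) x)) '' {x | q x ≤ 1}))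
      (sSup ((fun x => q ((F - (LinearMap.id : EuclideanSpace ℝ (Fin n) →ₗ[ℝ] EuclideanSpace ℝ (Fin n))) x)) '' {x | q x ≤ 1})) := by
  have happ : ∀ x, (F + (LinearMap.id : EuclideanSpace ℝ (Fin n) →ₗ[ℝ] EuclideanSpace ℝ (Fin n))) x = F x + x := by
    intro x; simp [LinearMap.add_apply]
  have happ' : ∀ x, (F - (LinearMap.id : EuclideanSpace ℝ (Fin n) →ₗ[ℝ] EuclideanSpace ℝ (Fin n))) x = F x - x := by
    intro x; simp [LinearMap.sub_apply]
  have bddp : BddAbove ((fun x => q ((F + (LinearMap.id : EuclideanSpace ℝ (Fin n) →ₗ[ℝ] EuclideanSpace ℝ (Fin n))) x)) '' {x | q x ≤ 1}) := by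
    refine ⟨2, ?_⟩
    rintro y ⟨x, hx, rfl⟩
    simp only [happ]
    calc q (F x + x) ≤ q (F x) + q x := qn_add hq _ _
      _ = q x + q x := by rw [hFiso]
      _ ≤ 2 := by have : q x ≤ 1 := hx; linarith
  have bddm : BddAbove ((fun x => q ((F - (LinearMap.id : EuclideanSpace ℝ (Fin n) →ₗ[ℝ] EuclideanSpace ℝ (Fin n))) x)) '' {x | q x ≤ 1}) := by
    refine ⟨2, ?_⟩
    rintro y ⟨x, hx, rfl⟩
    simp only [happ']
    have : q (F x - x) ≤ q (F x) + q x := by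
      have := qn_add hq (F x) (-x)
      rw [qn_neg hq] at this
      simpa [sub_eq_add_neg] using this
    calc q (F x - x) ≤ q (F x) + q x := this
      _ = q x + q x := by rw [hFiso]
      _ ≤ 2 := by have : q x ≤ 1 := hx; linarith
  apply le_min
  · refine le_trans h2 (le_csSup bddp ⟨xp, hxp, ?_⟩)
    simp only [happ]
  · refine le_trans h1 (le_csSup bddm ⟨xm, hxm, ?_⟩)
    simp only [happ']
end euc


section euc
variable {n : ℕ} {q : EuclideanSpace ℝ (Fin n) → ℝ}
/-- main structural lemma: existence of good F with witnesses -/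
lemma main_core (hn : 0 < n) (hq : IsNormFn q)
    (G : EuclideanSpace ℝ (Fin n) →ₗ[ℝ] EuclideanSpace ℝ (Fin n))
    (hGiso : ∀ x, q (G x) = q x)
    (hGne1 : G ≠ LinearMap.id) (hGne2 : G ≠ -LinearMap.id) :
    ∃ F : EuclideanSpace ℝ (Fin n) →ₗ[ℝ] EuclideanSpace ℝ (Fin n),
      (∀ x, q (F x) = q x) ∧ ∃ xm xp, q xm ≤ 1 ∧ q xp ≤ 1 ∧
        1 ≤ q (F xm - xm) ∧ 1 ≤ q (F xp + xp) := by
  classical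
  set B : Matrix (Fin n) (Fin n) ℝ := LinearMap.toMatrix' (eucL G) with hBdef
  have hB : ∀ x : EuclideanSpace ℝ (Fin n), B.mulVec x = G x := by
    intro x
    rw [hBdef, ← Matrix.toLin'_apply, Matrix.toLin'_toMatrix']
    rfl
  set Bc : Matrix (Fin n) (Fin n) ℂ := B.map (algebraMap ℝ ℂ) with hBcdef
  set P : Polynomial ℂ := Bc.charpoly with hPdef
  have hPmap : P = (B.charpoly).map (algebraMap ℝ ℂ) := Matrix.charpoly_map B (algebraMap ℝ ℂ)
  have hPmonic : P.Monic := Bc.charpoly_monic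
  have hPdeg : P.natDegree = n := by
    rw [hPdef, Matrix.charpoly_natDegree_eq_dim]
    simp
  have hPsplits : P.Splits := IsAlgClosed.splits P
  have hcard : P.roots.card = n := by
    rw [← hPdeg]
    exact (Polynomial.splits_iff_card_roots.mp hPsplits)
  -- helper: real roots are ±1, with eigenvector data
  have hreal_eig : ∀ t : ℝ, B.charpoly.eval t = 0 →
      ∃ x : EuclideanSpace ℝ (Fin n), x ≠ 0 ∧ G x = t • x ∧ (t = 1 ∨ t = -1) := by
    intro t ht
    obtain ⟨x', hx0', hx⟩ := eigvec_of_root B t ht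
    set x : EuclideanSpace ℝ (Fin n) := WithLp.toLp 2 x' with hxdef
    have hx0 : x ≠ 0 := fun h => hx0' (congrArg WithLp.ofLp h)
    have hGx : G x = t • x := by apply WithLp.ofLp_injective 2; rw [← hB]; exact hx
    have hxq : q (x : EuclideanSpace ℝ (Fin n)) ≠ 0 := by
      intro h
      exact hx0 ((qn_eq_zero hq x).mp h)
    have habs : |t| = 1 := by
      have h1 : q (G x) = q x := hGiso x
      rw [hGx, qn_smul hq] at h1
      have h2 : |t| * q x = 1 * q x := by rw [one_mul, h1]
      exact mul_right_cancel₀ hxq h2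
    refine ⟨x, hx0, hGx, ?_⟩
    rcases abs_cases t with ⟨h, _⟩ | ⟨h, _⟩
    · left; rw [← h, habs]
    · right; rw [← neg_eq_iff_eq_neg]; rw [← h, habs]
  -- real root → eval over ℝ
  have hroot_to_real : ∀ t : ℂ, t ∈ P.roots → t.im = 0 → B.charpoly.eval t.re = 0 := by
    intro t ht him
    have heval : P.eval t = 0 := (Polynomial.isRoot_of_mem_roots ht)
    have htre : t = (algebraMap ℝ ℂ) t.re := by
      apply Complex.ext
      · simp
      · simp [him]
    rw [htre, hPmap] at heval
    have : (algebraMap ℝ ℂ) (B.charpoly.eval t.re) = 0 := by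
      rw [← heval, Polynomial.eval_map, Polynomial.eval₂_at_apply]
    exact (map_eq_zero_iff _ (RingHom.injective _)).mp this
  by_cases hC : ∃ t ∈ P.roots, t.im ≠ 0
  · -- complex case
    obtain ⟨t, htmem, htim⟩ := hC
    have heval : P.eval t = 0 := Polynomial.isRoot_of_mem_roots htmem
    obtain ⟨z, hz0, hz⟩ := eigvec_of_root Bc t (by rw [← hPdef]; exact heval)
    by_cases habs : 1 ≤ ‖t‖
    · exact caseA hn hq G hGiso t z hz0 (by rw [← hBcdef]; exact hz) htim habs
    · -- use inverse
      push_neg at habs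
      have htne : t ≠ 0 := fun h => htim (by rw [h]; rfl)
      have hinj : Function.Injective G := by
        intro x y hxy
        have h1 : G (x - y) = 0 := by rw [map_sub, hxy, sub_self]
        have h2 : q (x - y) = 0 := by rw [← hGiso, h1, qn_zero hq]
        have := (qn_eq_zero hq _).mp h2
        exact sub_eq_zero.mp this
      have hsurj : Function.Surjective G := (LinearMap.injective_iff_surjective).mp hinj
      set e : EuclideanSpace ℝ (Fin n) ≃ₗ[ℝ] EuclideanSpace ℝ (Fin n) :=
        LinearEquiv.ofBijective G ⟨hinj, hsurj⟩ with hedef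
      set Gi : EuclideanSpace ℝ (Fin n) →ₗ[ℝ] EuclideanSpace ℝ (Fin n) := e.symm.toLinearMap with hGidef
      have hGe : ∀ x, G (Gi x) = x := fun x => e.apply_symm_apply x
      have heG : ∀ x, Gi (G x) = x := fun x => e.symm_apply_apply x
      have hGiiso : ∀ x, q (Gi x) = q x := by
        intro x
        rw [← hGiso (Gi x), hGe]
      set Bi : Matrix (Fin n) (Fin n) ℝ := LinearMap.toMatrix' (eucL Gi) with hBidef
      have hBi : ∀ x : EuclideanSpace ℝ (Fin n), Bi.mulVec x = Gi x := by
        intro x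
        rw [hBidef, ← Matrix.toLin'_apply, Matrix.toLin'_toMatrix']
        rfl
      have hBiB : Bi * B = 1 := by
        have h1 : (eucL Gi) ∘ₗ (eucL G) = LinearMap.id := by
          apply LinearMap.ext
          intro x
          simp [eucL, heG]
        rw [hBidef, hBdef, ← LinearMap.toMatrix'_comp, h1, LinearMap.toMatrix'_id]
      have hBiBc : (Bi.map (algebraMap ℝ ℂ)) * Bc = 1 := by
        rw [hBcdef]
        have := congrArg (fun M => (algebraMap ℝ ℂ).mapMatrix M) hBiB
        simpa [RingHom.mapMatrix_apply, map_mul, map_one] using this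
      have heigi : (Bi.map (algebraMap ℝ ℂ)).mulVec z = t⁻¹ • z := by
        have h1 : (Bi.map (algebraMap ℝ ℂ)).mulVec (t • z) = z := by
          rw [← hz, Matrix.mulVec_mulVec, hBiBc, Matrix.one_mulVec]
        rw [Matrix.mulVec_smul] at h1
        have := congrArg (fun v => t⁻¹ • v) h1
        simpa [smul_smul, inv_mul_cancel₀ htne] using this
      have htiim : (t⁻¹).im ≠ 0 := by
        rw [Complex.inv_im]
        intro h
        rcases div_eq_zero_iff.mp h with h | h
        · exact htim (by linarith [neg_eq_zero.mp h])
        · exact htne (by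
            have := Complex.normSq_eq_zero.mp h
            exact this)
      have htiabs : 1 ≤ ‖t⁻¹‖ := by
        rw [norm_inv]
        rw [one_le_inv_iff₀]
        constructor
        · exact norm_pos_iff.mpr htne
        · exact le_of_lt habs
      exact caseA hn hq Gi hGiiso t⁻¹ z hz0 heigi htiim htiabs
  · -- all roots real
    push_neg at hC
    have hall : ∀ t ∈ P.roots, t = 1 ∨ t = -1 := by
      intro t ht
      have him := hC t ht
      obtain ⟨x, hx0, hGx, hpm⟩ := hreal_eig t.re (hroot_to_real t ht him)
      have ht' : t = ((t.re : ℝ) : ℂ) := Complex.ext (by simp) (by simp [him])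
      rcases hpm with h | h
      · left; rw [ht', h]; simp
      · right; rw [ht', h]; simp
    by_cases h1 : (1:ℂ) ∈ P.roots <;> by_cases hm1 : (-1:ℂ) ∈ P.roots
    · -- both eigenvalues
      obtain ⟨xp, hxp0, hGxp, _⟩ := hreal_eig 1 (by
        have := hroot_to_real 1 h1 (by simp)
        simpa using this)
      obtain ⟨xm, hxm0, hGxm, _⟩ := hreal_eig (-1) (by
        have := hroot_to_real (-1) hm1 (by simp)
        simpa using this)
      have hqxp : 0 < q xp := by
        rcases (qn_nonneg hq xp).lt_or_eq with h | h
        · exact h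
        · exact absurd ((qn_eq_zero hq _).mp h.symm) hxp0
      have hqxm : 0 < q xm := by
        rcases (qn_nonneg hq xm).lt_or_eq with h | h
        · exact h
        · exact absurd ((qn_eq_zero hq _).mp h.symm) hxm0
      refine ⟨G, hGiso, (q xm)⁻¹ • xm, (q xp)⁻¹ • xp, ?_, ?_, ?_, ?_⟩
      · rw [qn_smul hq, abs_of_nonneg (by positivity)]
        rw [inv_mul_cancel₀ hqxm.ne']
      · rw [qn_smul hq, abs_of_nonneg (by positivity)]
        rw [inv_mul_cancel₀ hqxp.ne']
      · have : G ((q xm)⁻¹ • xm) = (q xm)⁻¹ • G xm := map_smul _ _ _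
        rw [this, hGxm]
        rw [show (q xm)⁻¹ • (-1 : ℝ) • xm - (q xm)⁻¹ • xm = (-2 * (q xm)⁻¹) • xm by module]
        rw [qn_smul hq, abs_mul]
        rw [abs_of_nonneg (by positivity : (0:ℝ) ≤ (q xm)⁻¹)]
        rw [show |(-2:ℝ)| = 2 by norm_num]
        rw [mul_assoc, inv_mul_cancel₀ hqxm.ne']
        norm_num
      · have : G ((q xp)⁻¹ • xp) = (q xp)⁻¹ • G xp := map_smul _ _ _
        rw [this, hGxp]
        rw [show (q xp)⁻¹ • (1:ℝ) • xp + (q xp)⁻¹ • xp = (2 * (q xp)⁻¹) • xp by module]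
        rw [qn_smul hq, abs_mul]
        rw [abs_of_nonneg (by positivity : (0:ℝ) ≤ (q xp)⁻¹)]
        rw [show |(2:ℝ)| = 2 by norm_num]
        rw [mul_assoc, inv_mul_cancel₀ hqxp.ne']
        norm_num
    · -- only root 1 : unipotent, contradiction
      exfalso
      have hallone : ∀ t ∈ P.roots, t = 1 := by
        intro t ht
        rcases hall t ht with h | h
        · exact h
        · exact absurd (h ▸ ht) hm1
      have hPeq : P = (Polynomial.X - Polynomial.C 1) ^ n := by
        have hprod := Polynomial.Splits.eq_prod_roots_of_monic hPsplits hPmonic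
        have hrep : P.roots.map (fun a => Polynomial.X - Polynomial.C a)
            = Multiset.replicate n (Polynomial.X - Polynomial.C 1) := by
          apply Multiset.eq_replicate.mpr
          constructor
          · rw [Multiset.card_map, hcard]
          · intro b hb
            obtain ⟨a, ha, rfl⟩ := Multiset.mem_map.mp hb
            rw [hallone a ha]
        rw [hprod, hrep, Multiset.prod_replicate]
      have hRch : B.charpoly = (Polynomial.X - Polynomial.C 1) ^ n := by
        apply Polynomial.map_injective (algebraMap ℝ ℂ) (RingHom.injective _)
        rw [← hPmap, hPeq]
        simp [Polynomial.map_pow, Polynomial.map_sub]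
      have hCH : (B - 1) ^ n = 0 := by
        have := B.aeval_self_charpoly
        rw [hRch] at this
        rw [map_pow, map_sub, Polynomial.aeval_X] at this
        simpa using this
      have hd : ((G - (1:ℝ) • LinearMap.id) : EuclideanSpace ℝ (Fin n) →ₗ[ℝ] EuclideanSpace ℝ (Fin n)) ^ n = 0 := by
        have hB1 : ∀ x : EuclideanSpace ℝ (Fin n), (B - 1).mulVec x = ((G - (1:ℝ) • LinearMap.id) : EuclideanSpace ℝ (Fin n) →ₗ[ℝ] EuclideanSpace ℝ (Fin n)) x := by
          intro x
          rw [Matrix.sub_mulVec, Matrix.one_mulVec, hB]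
          simp [LinearMap.sub_apply]
        apply LinearMap.ext
        intro x
        apply WithLp.ofLp_injective 2
        have := mulVec_pow_apply (G - (1:ℝ) • LinearMap.id) (B - 1) hB1 n x
        rw [← this, hCH]
        simp [Matrix.zero_mulVec]
      exact no_unipotent hn hq G hGiso 1 (Or.inl rfl) n hd (by
        intro h
        apply hGne1
        rw [h, one_smul])
    · -- only root -1
      exfalso
      have hallone : ∀ t ∈ P.roots, t = -1 := by
        intro t ht
        rcases hall t ht with h | h
        · exact absurd (h ▸ ht) h1
        · exact h
      have hPeq : P = (Polynomial.X - Polynomial.C (-1)) ^ n := by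
        have hprod := Polynomial.Splits.eq_prod_roots_of_monic hPsplits hPmonic
        have hrep : P.roots.map (fun a => Polynomial.X - Polynomial.C a)
            = Multiset.replicate n (Polynomial.X - Polynomial.C (-1)) := by
          apply Multiset.eq_replicate.mpr
          constructor
          · rw [Multiset.card_map, hcard]
          · intro b hb
            obtain ⟨a, ha, rfl⟩ := Multiset.mem_map.mp hb
            rw [hallone a ha]
        rw [hprod, hrep, Multiset.prod_replicate]
      have hRch : B.charpoly = (Polynomial.X - Polynomial.C (-1)) ^ n := by
        apply Polynomial.map_injective (algebraMap ℝ ℂ) (RingHom.injective _)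
        rw [← hPmap, hPeq]
        simp [Polynomial.map_pow, Polynomial.map_sub]
      have hCH : (B + 1) ^ n = 0 := by
        have := B.aeval_self_charpoly
        rw [hRch] at this
        rw [map_pow, map_sub, Polynomial.aeval_X] at this
        simpa [sub_neg_eq_add] using this
      have hd : ((G - (-1:ℝ) • LinearMap.id) : EuclideanSpace ℝ (Fin n) →ₗ[ℝ] EuclideanSpace ℝ (Fin n)) ^ n = 0 := by
        have hB1 : ∀ x : EuclideanSpace ℝ (Fin n), (B + 1).mulVec x = ((G - (-1:ℝ) • LinearMap.id) : EuclideanSpace ℝ (Fin n) →ₗ[ℝ] EuclideanSpace ℝ (Fin n)) x := by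
          intro x
          rw [Matrix.add_mulVec, Matrix.one_mulVec, hB]
          simp [LinearMap.sub_apply]
        apply LinearMap.ext
        intro x
        apply WithLp.ofLp_injective 2
        have := mulVec_pow_apply (G - (-1:ℝ) • LinearMap.id) (B + 1) hB1 n x
        rw [← this, hCH]
        simp [Matrix.zero_mulVec]
      exact no_unipotent hn hq G hGiso (-1) (Or.inr rfl) n hd (by
        intro h
        apply hGne2
        rw [h, neg_smul, one_smul])
    · -- no roots at all: impossible
      exfalso
      have : P.roots ≠ 0 := by
        intro h
        rw [h] at hcard
        simp at hcard
        omega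
      obtain ⟨t, ht⟩ := Multiset.exists_mem_of_ne_zero this
      rcases hall t ht with h | h
      · exact h1 (h ▸ ht)
      · exact hm1 (h ▸ ht)
end euc


/-- If the isometry group is nontrivial, some isometry is far from ±Id. -/
theorem stmt14 {n : ℕ} (q : EuclideanSpace ℝ (Fin n) → ℝ) (hq : IsNormFn q)
    (hnontriv : ∃ G : EuclideanSpace ℝ (Fin n) →ₗ[ℝ] EuclideanSpace ℝ (Fin n),
      (∀ x, q (G x) = q x) ∧ G ≠ LinearMap.id ∧ G ≠ -LinearMap.id) :
    ∃ F : EuclideanSpace ℝ (Fin n) →ₗ[ℝ] EuclideanSpace ℝ (Fin n),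
      (∀ x, q (F x) = q x) ∧
      1 ≤ min
        (sSup ((fun x => q ((F + (LinearMap.id : EuclideanSpace ℝ (Fin n) →ₗ[ℝ] EuclideanSpace ℝ (Fin n))) x)) '' {x | q x ≤ 1}))
        (sSup ((fun x => q ((F - (LinearMap.id : EuclideanSpace ℝ (Fin n) →ₗ[ℝ] EuclideanSpace ℝ (Fin n))) x)) '' {x | q x ≤ 1})) := by
  obtain ⟨G, hGiso, hGne1, hGne2⟩ := hnontriv
  rcases Nat.eq_zero_or_pos n with hzero | hn
  · exfalso
    apply hGne1
    apply LinearMap.ext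
    intro x
    subst hzero
    have hall : ∀ y : EuclideanSpace ℝ (Fin 0), y = 0 := by
      intro y
      ext i
      exact i.elim0
    rw [hall (G x)]
    rw [hall (LinearMap.id x)]
  · obtain ⟨F, hFiso, xm, xp, hxm, hxp, h1, h2⟩ := main_core hn hq G hGiso hGne1 hGne2
    exact ⟨F, hFiso, conclude hq F hFiso xm xp hxm hxp h1 h2⟩
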